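/- Let ε > 0, b ∈ [0, 2(e^ε − 1)], and let R₁, Rᵢ be integrable random variables with values in [0,1] almost surely, means μ₁, μᵢ and equal variances σ₁² = σᵢ². Then under the quadratic probability function the gap between privatized means equals E[p(R₁)] − E[p(Rᵢ)] = (((e^ε − 1 − b)(μ₁ + μᵢ) + b)/(e^ε + 1)) · (μ₁ − μᵢ). -/
import Mathlib


open Real Set MeasureTheory

lemma sq_integral_eq {Ω : Type*} [MeasurableSpace Ω] (P : Measure Ω)
    [IsProbabilityMeasure P] (R : Ω → ℝ) (μ σsq : ℝ)
    (hint : Integrable R P) (hint2 : Integrable (fun ω => (R ω) ^ 2) P)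
    (hmean : ∫ ω, R ω ∂P = μ) (hvar : ∫ ω, (R ω - μ) ^ 2 ∂P = σsq) :
    ∫ ω, (R ω) ^ 2 ∂P = σsq + μ ^ 2 := by
  have h : (fun ω => (R ω - μ) ^ 2) = fun ω => (R ω) ^ 2 - 2 * μ * R ω + μ ^ 2 := by
    funext ω; ring
  rw [h] at hvar
  rw [integral_add (by exact (hint2.sub ((hint.const_mul (2*μ))))) (integrable_const _),
    integral_sub hint2 (hint.const_mul (2*μ)), integral_const_mul, hmean,
    integral_const] at hvar
  simp at hvar
  linarith

/-- Under the quadratic probability function, for two arms with means `μ₁, μᵢ` and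
equal variances, the gap between privatized means equals
`(((e^ε-1-b)(μ₁+μᵢ)+b)/(e^ε+1))(μ₁-μᵢ)`. -/
theorem quadratic_privatized_mean_gap_equal_var {Ω : Type*} [MeasurableSpace Ω]
    (P : Measure Ω) [IsProbabilityMeasure P]
    (ε b : ℝ) (hε : 0 < ε) (hb : b ∈ Icc (0:ℝ) (2 * (exp ε - 1)))
    (R₁ Rᵢ : Ω → ℝ) (μ₁ μᵢ σsq : ℝ)
    (hint₁ : Integrable R₁ P) (hintᵢ : Integrable Rᵢ P)
    (hint₁2 : Integrable (fun ω => (R₁ ω) ^ 2) P)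
    (hintᵢ2 : Integrable (fun ω => (Rᵢ ω) ^ 2) P)
    (hbd₁ : ∀ᵐ ω ∂P, R₁ ω ∈ Icc (0:ℝ) 1)
    (hbdᵢ : ∀ᵐ ω ∂P, Rᵢ ω ∈ Icc (0:ℝ) 1)
    (hmean₁ : ∫ ω, R₁ ω ∂P = μ₁) (hmeanᵢ : ∫ ω, Rᵢ ω ∂P = μᵢ)
    (hvar₁ : ∫ ω, (R₁ ω - μ₁) ^ 2 ∂P = σsq)
    (hvarᵢ : ∫ ω, (Rᵢ ω - μᵢ) ^ 2 ∂P = σsq) :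
    (∫ ω, ((exp ε - 1 - b) * (R₁ ω) ^ 2 + b * R₁ ω + 1) / (exp ε + 1) ∂P)
      - (∫ ω, ((exp ε - 1 - b) * (Rᵢ ω) ^ 2 + b * Rᵢ ω + 1) / (exp ε + 1) ∂P)
      = (((exp ε - 1 - b) * (μ₁ + μᵢ) + b) / (exp ε + 1)) * (μ₁ - μᵢ) := by
  have h₁ := sq_integral_eq P R₁ μ₁ σsq hint₁ hint₁2 hmean₁ hvar₁
  have hᵢ := sq_integral_eq P Rᵢ μᵢ σsq hintᵢ hintᵢ2 hmeanᵢ hvarᵢ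
  have key : ∀ (R : Ω → ℝ), Integrable R P → Integrable (fun ω => (R ω)^2) P →
      (∫ ω, ((exp ε - 1 - b) * (R ω) ^ 2 + b * R ω + 1) / (exp ε + 1) ∂P)
      = ((exp ε - 1 - b) * (∫ ω, (R ω)^2 ∂P) + b * (∫ ω, R ω ∂P) + 1) / (exp ε + 1) := by
    intro R hR hR2
    simp_rw [div_eq_mul_inv]
    rw [integral_mul_const,
      integral_add (by exact (hR2.const_mul _).add (hR.const_mul _)) (integrable_const _),
      integral_add (hR2.const_mul _) (hR.const_mul _),
      integral_const_mul, integral_const_mul, integral_const]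
    simp
  rw [key R₁ hint₁ hint₁2, key Rᵢ hintᵢ hintᵢ2, h₁, hᵢ, hmean₁, hmeanᵢ,
    div_sub_div_same, div_mul_eq_mul_div]
  ring_nf
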